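/- Let n be a positive natural number and let a ∈ Mₙ(ℂ). If trace(aᴴ * p * a * (1 - p)) = 0 for every projection p ∈ Mₙ(ℂ) (i.e. every p with pᴴ = p and p * p = p), then a is a scalar matrix: there exists c ∈ ℂ with a = c • 1. -/

import Mathlib

open Matrix

theorem scalar_of_trace_compression_zero
    (n : ℕ) (hn : 0 < n) (a : Matrix (Fin n) (Fin n) ℂ)
    (h : ∀ p : Matrix (Fin n) (Fin n) ℂ,
      p.conjTranspose = p → p * p = p →
      (a.conjTranspose * p * a * (1 - p)).trace = 0) :
    ∃ c : ℂ, a = c • (1 : Matrix (Fin n) (Fin n) ℂ) := by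
  classical
  -- trace(BᴴB) = 0 → B = 0
  have tzero : ∀ B : Matrix (Fin n) (Fin n) ℂ, (Bᴴ * B).trace = 0 → B = 0 := by
    intro B hB
    have h1 : (↑(∑ i, ∑ k, Complex.normSq (B k i)) : ℂ) = 0 := by
      rw [← hB]
      push_cast
      simp [Matrix.trace, Matrix.diag, Matrix.mul_apply, Matrix.conjTranspose_apply,
        Complex.normSq_eq_conj_mul_self]
    have h2 : ∑ i, ∑ k, Complex.normSq (B k i) = 0 := by exact_mod_cast h1
    ext k i
    have h3 := (Finset.sum_eq_zero_iff_of_nonneg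
      (fun i _ => Finset.sum_nonneg fun k _ => Complex.normSq_nonneg _)).mp h2 i
      (Finset.mem_univ i)
    have h4 := (Finset.sum_eq_zero_iff_of_nonneg
      (fun k _ => Complex.normSq_nonneg _)).mp h3 k (Finset.mem_univ k)
    simpa using Complex.normSq_eq_zero.mp h4
  -- for any projection p, p a (1-p) = 0
  have key : ∀ p : Matrix (Fin n) (Fin n) ℂ, pᴴ = p → p * p = p →
      p * a * (1 - p) = 0 := by
    intro p hp hpp
    apply tzero
    have hq : (1 - p) * (1 - p) = 1 - p := by
      rw [sub_mul, one_mul, mul_sub, mul_one, hpp]; abel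
    have e1 : (p * a * (1 - p))ᴴ * (p * a * (1 - p))
        = (1 - p) * (aᴴ * p * a * (1 - p)) := by
      rw [conjTranspose_mul, conjTranspose_mul, Matrix.conjTranspose_sub,
        conjTranspose_one, hp]
      simp only [mul_assoc]
      rw [← mul_assoc p p, hpp]
    rw [e1, Matrix.trace_mul_comm]
    rw [mul_assoc, hq]
    exact h p hp hpp
  -- every projection commutes with a
  have comm : ∀ p : Matrix (Fin n) (Fin n) ℂ, pᴴ = p → p * p = p →
      p * a = a * p := by
    intro p hp hpp
    have hp' : (1 - p)ᴴ = 1 - p := by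
      rw [Matrix.conjTranspose_sub, conjTranspose_one, hp]
    have hpp' : (1 - p) * (1 - p) = 1 - p := by
      rw [sub_mul, one_mul, mul_sub, mul_one, hpp]; abel
    have k1 := key p hp hpp
    have k2 := key (1 - p) hp' hpp'
    rw [sub_sub_cancel] at k2
    rw [mul_sub, mul_one, sub_eq_zero] at k1
    rw [sub_mul, one_mul, sub_mul, sub_eq_zero] at k2
    rw [k1, k2]
  -- off-diagonal entries vanish
  have offdiag : ∀ i k : Fin n, k ≠ i → a k i = 0 := by
    intro i k hki
    have hph : (single i i (1 : ℂ))ᴴ = single i i 1 := by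
      ext k l
      simp [Matrix.single, Matrix.conjTranspose_apply, apply_ite, and_comm]
    have hpp : single i i (1 : ℂ) * single i i 1
        = single i i 1 := by
      rw [single_mul_single_same, one_mul]
    have hc := comm _ hph hpp
    have := congrFun (congrFun hc k) i
    rw [Matrix.mul_single_apply_same, Matrix.single_mul_apply_of_ne _ _ _ _ _ hki] at this
    simpa using this.symm
  -- diagonal entries are all equal
  have diag : ∀ i j : Fin n, a i i = a j j := by
    intro i j
    by_cases hij : i = j
    · rw [hij]
    · set σ : Matrix (Fin n) (Fin n) ℂ :=
        single i i 1 + single i j 1 + single j i 1 +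
          single j j 1 with hσdef
      have hct : ∀ u v : Fin n, (single u v (1:ℂ))ᴴ = single v u 1 := by
        intro u v
        ext k l
        simp [Matrix.single, Matrix.conjTranspose_apply, apply_ite, and_comm]
      have hσh : σᴴ = σ := by
        simp only [hσdef, Matrix.conjTranspose_add, hct]
        abel
      have hji : j ≠ i := fun hh => hij hh.symm
      have hσσ : σ * σ = (2 : ℂ) • σ := by
        simp only [hσdef, add_mul, mul_add, single_mul_single_same,
          Matrix.single_mul_single_of_ne _ _ _ _ hij, Matrix.single_mul_single_of_ne _ _ _ _ hji,
          one_mul, add_zero, zero_add]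
        module
      have hph : ((1/2 : ℂ) • σ)ᴴ = (1/2 : ℂ) • σ := by
        rw [Matrix.conjTranspose_smul, hσh]
        norm_num
      have hpp : ((1/2 : ℂ) • σ) * ((1/2 : ℂ) • σ) = (1/2 : ℂ) • σ := by
        rw [Matrix.smul_mul, Matrix.mul_smul, hσσ]
        module
      have hc := comm _ hph hpp
      rw [Matrix.smul_mul, Matrix.mul_smul] at hc
      have hc2 : σ * a = a * σ := by
        have := smul_right_injective (Matrix (Fin n) (Fin n) ℂ)
          (by norm_num : (1/2 : ℂ) ≠ 0) hc
        exact this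
      have := congrFun (congrFun hc2 i) j
      simp only [hσdef, add_mul, mul_add, Matrix.add_apply,
        Matrix.single_mul_apply_same, Matrix.mul_single_apply_same,
        Matrix.single_mul_apply_of_ne _ _ _ _ _ hij,
        Matrix.mul_single_apply_of_ne _ _ _ _ _ hji, one_mul, mul_one,
        add_zero, zero_add] at this
      -- this : a i j + a j j = ... something with a i i + a i j
      linear_combination -this
  refine ⟨a ⟨0, hn⟩ ⟨0, hn⟩, ?_⟩
  ext k l
  by_cases hkl : k = l
  · subst hkl
    simp [Matrix.one_apply, diag k ⟨0, hn⟩]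
  · simp [Matrix.one_apply, hkl, offdiag l k hkl]
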